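/- With μ_t(s) = ε(t)^{−2} e^{−s/ε(t)}, ε(t) = (1/4)(π/2 − arctan t): there exists δ > 0 such that ∂_t μ_t(s) + ∂_s μ_t(s) + δ κ(t) μ_t(s) ≤ 0 for all t ∈ ℝ and s > 0, where κ(t) = 1/ε(t). -/

import Mathlib

open Real

/-- Condition (M₄) for the example kernel `μ_t(s) = ε(t)^{−2} e^{−s/ε(t)}`,
`ε(t) = (1/4)(π/2 − arctan t)`: there exists `δ > 0` with
`∂_t μ_t(s) + ∂_s μ_t(s) + δ κ(t) μ_t(s) ≤ 0` for all `t` and `s > 0`, where `κ(t) = 1/ε(t)`. -/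
theorem example_kernel_M4
    (e : ℝ → ℝ) (μ : ℝ → ℝ → ℝ)
    (he : ∀ t, e t = (π / 2 - Real.arctan t) / 4)
    (hμ : ∀ t s, μ t s = Real.exp (-s / e t) / (e t) ^ 2) :
    ∃ δ > 0, ∀ t : ℝ, ∀ s : ℝ, 0 < s →
      deriv (fun r : ℝ => μ r s) t + deriv (fun r : ℝ => μ t r) s
        + δ * (1 / e t) * μ t s ≤ 0 := by
  have hepos : ∀ x, 0 < e x := by
    intro x
    rw [he]
    have := Real.arctan_lt_pi_div_two x
    linarith
  refine ⟨1/2, by norm_num, ?_⟩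
  intro t s hs
  have hεt : 0 < e t := hepos t
  have hεne : e t ≠ 0 := ne_of_gt hεt
  have h1t : (0:ℝ) < 1 + t ^ 2 := by positivity
  -- derivative of e
  have heq : e = fun x => (π / 2 - Real.arctan x) / 4 := funext he
  have hE : HasDerivAt e (-(1 / (1 + t ^ 2)) / 4) t := by
    rw [heq]
    have h := Real.hasDerivAt_arctan t
    have h2 := ((hasDerivAt_const t (π / 2)).sub h).div_const 4
    refine h2.congr_deriv ?_
    ring
  set c : ℝ := 1 / (1 + t ^ 2) with hc
  have hcpos : 0 < c := by positivity
  have hcle : c ≤ 1 := by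
    rw [hc]
    rw [div_le_one h1t]
    nlinarith [sq_nonneg t]
  set E : ℝ := Real.exp (-s / e t) with hEdef
  have hEpos : 0 < E := Real.exp_pos _
  -- derivative in t
  have hDt : HasDerivAt (fun r : ℝ => μ r s) (E * (-(c / 4)) * (s - 2 * e t) / (e t) ^ 4) t := by
    have hfun : (fun r : ℝ => μ r s) = fun r => Real.exp (-s / e r) / (e r) ^ 2 := by
      funext r; exact hμ r s
    rw [hfun]
    have hinner : HasDerivAt (fun r => -s / e r) ((0 * e t - (-s) * (-(1 / (1 + t ^ 2)) / 4)) / (e t) ^ 2) t :=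
      (hasDerivAt_const t (-s)).div hE hεne
    have hexp := hinner.exp
    have hden : HasDerivAt (fun r => (e r) ^ 2) (2 * (e t) ^ 1 * (-(1 / (1 + t ^ 2)) / 4)) t := hE.pow 2
    have := hexp.div hden (by positivity)
    refine this.congr_deriv ?_
    have h4 : (e t) ^ 4 ≠ 0 := by positivity
    have h1ne : (1 + t ^ 2) ≠ 0 := ne_of_gt h1t
    simp only [hEdef, hc]
    field_simp
    ring
  -- derivative in s
  have hDs : HasDerivAt (fun r : ℝ => μ t r) (E * (-(1 / e t)) / (e t) ^ 2) s := by
    have hfun : (fun r : ℝ => μ t r) = fun r => Real.exp (-r / e t) / (e t) ^ 2 := by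
      funext r; exact hμ t r
    rw [hfun]
    have hinner : HasDerivAt (fun r : ℝ => -r / e t) (-1 / e t) s := by
      have := ((hasDerivAt_id s).neg).div_const (e t)
      exact this
    have := (hinner.exp).div_const ((e t) ^ 2)
    refine this.congr_deriv ?_
    ring
  rw [hDt.deriv, hDs.deriv, hμ t s]
  -- now pure arithmetic
  rw [div_add_div _ _ (by positivity : (e t)^4 ≠ 0) (by positivity : (e t)^2 ≠ 0)]
  have key : E * (-(c / 4)) * (s - 2 * e t) / (e t) ^ 4 + E * (-(1 / e t)) / (e t) ^ 2
      + 1 / 2 * (1 / e t) * (E / (e t) ^ 2) ≤ 0 := by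
    have hmain : -(c / 4) * (s - 2 * e t) - e t + e t / 2 ≤ 0 := by nlinarith
    have hfac : E * (-(c / 4)) * (s - 2 * e t) / (e t) ^ 4 + E * (-(1 / e t)) / (e t) ^ 2
        + 1 / 2 * (1 / e t) * (E / (e t) ^ 2)
        = E / (e t) ^ 4 * (-(c / 4) * (s - 2 * e t) - e t + e t / 2) := by
      field_simp
      ring
    rw [hfac]
    have : 0 < E / (e t) ^ 4 := by positivity
    nlinarith
  calc _ ≤ _ := by
        rw [div_add_div _ _ (by positivity : (e t)^4 ≠ 0) (by positivity : (e t)^2 ≠ 0)] at key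
        exact key
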